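/- The sink-mutation periodicity of B^c: for the skew-symmetrizable matrix B^c associated with a Coxeter element c = c_1⋯c_n, the composite mutation μ_{c_1} ∘ ⋯ ∘ μ_{c_n} applied to the extended matrix [B^c; I_n] yields [B^c; -I_n]; each μ_{c_i} in this sequence is a sink mutation. -/

import Mathlib

/-- Mutation in direction `k` of an extended integer matrix (rows `Fin n ⊕ Fin n`). -/
def extMut {n : ℕ} (A : Matrix (Fin n ⊕ Fin n) (Fin n) ℤ) (k : Fin n) :
    Matrix (Fin n ⊕ Fin n) (Fin n) ℤ :=
  fun i j => if i = Sum.inl k ∨ j = k then -A i j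
    else A i j + max (A i k) 0 * A (Sum.inl k) j + A i k * max (-A (Sum.inl k) j) 0

/-- The extended matrix `[B; I_n]`. -/
def extOf {n : ℕ} (B : Matrix (Fin n) (Fin n) ℤ) : Matrix (Fin n ⊕ Fin n) (Fin n) ℤ :=
  fun i j => Sum.elim (fun r => B r j) (fun r => if r = j then 1 else 0) i

/-- The skew-symmetrizable matrix `B^c` attached to a Cartan matrix `C` and a Coxeter
element `c = c_1 ⋯ c_n`, with `c_k = s_{w k}` for a permutation `w` of the indices:
`b_ii = 0`, `b_ij = C_ij` if `s_j` precedes `s_i` in `c`, and `b_ij = -C_ij` otherwise. -/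
def Bc {n : ℕ} (C : Matrix (Fin n) (Fin n) ℤ) (w : Equiv.Perm (Fin n)) :
    Matrix (Fin n) (Fin n) ℤ :=
  fun i j => if i = j then 0 else if w.symm j < w.symm i then C i j else -C i j

/-- The word `c_1, …, c_n` of the Coxeter element. -/
def coxWord {n : ℕ} (w : Equiv.Perm (Fin n)) : List (Fin n) := List.ofFn fun k => w k

/-- `coxState C w k` is the extended matrix obtained from `[B^c; I_n]` by applying the
mutations `μ_{c_n}, …, μ_{c_{k+1}}` (so `coxState C w n = [B^c; I_n]` and
`coxState C w 0 = (μ_{c_1} ∘ ⋯ ∘ μ_{c_n})([B^c; I_n])`). -/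
def coxState {n : ℕ} (C : Matrix (Fin n) (Fin n) ℤ) (w : Equiv.Perm (Fin n)) (k : ℕ) :
    Matrix (Fin n ⊕ Fin n) (Fin n) ℤ :=
  ((coxWord w).drop k).foldr (fun idx A => extMut A idx) (extOf (Bc C w))

namespace CoxAux

/-- The sign `(-1)` on indices that have already been mutated (position `≥ k`). -/
def mySgn {n : ℕ} (k : ℕ) (a : Fin n) : ℤ := if k ≤ (a : ℕ) then -1 else 1

lemma mySgn_succ {n : ℕ} {k : ℕ} {a : Fin n} (h : (a : ℕ) ≠ k) :
    mySgn (k + 1) a = mySgn k a := by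
  unfold mySgn; split_ifs <;> omega

lemma mySgn_self {n : ℕ} (k : ℕ) (hk : k < n) :
    mySgn (k + 1) (⟨k, hk⟩ : Fin n) = 1 := by simp [mySgn]

lemma mySgn_self' {n : ℕ} (k : ℕ) (hk : k < n) :
    mySgn k (⟨k, hk⟩ : Fin n) = -1 := by simp [mySgn]

/-- The explicit formula for `coxState C w k`. -/
def stateF {n : ℕ} (C : Matrix (Fin n) (Fin n) ℤ) (w : Equiv.Perm (Fin n)) (k : ℕ) :
    Matrix (Fin n ⊕ Fin n) (Fin n) ℤ :=
  fun i j => Sum.elim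
    (fun r => mySgn k (w.symm r) * mySgn k (w.symm j) * Bc C w r j)
    (fun r => if r = j then mySgn k (w.symm r) else 0) i

lemma cancel {x y : ℤ} (hx : 0 ≤ x) (hy : y ≤ 0) (z : ℤ) :
    z + max x 0 * y + x * max (-y) 0 = z := by
  rw [max_eq_left hx, max_eq_left (by linarith : (0:ℤ) ≤ -y)]; ring

lemma row_nonpos {n : ℕ} (C : Matrix (Fin n) (Fin n) ℤ)
    (hoff : ∀ i j, i ≠ j → C i j ≤ 0) (w : Equiv.Perm (Fin n))
    (k : ℕ) (hk : k < n) (j : Fin n) :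
    stateF C w (k + 1) (Sum.inl (w ⟨k, hk⟩)) j ≤ 0 := by
  simp only [stateF, Sum.elim_inl, Equiv.symm_apply_apply, mySgn_self k hk, one_mul]
  by_cases hj : j = w ⟨k, hk⟩
  · subst hj; simp [Bc]
  · have hCj : C (w ⟨k, hk⟩) j ≤ 0 := hoff _ _ fun h => hj h.symm
    have hb : (w.symm j : ℕ) ≠ k := by
      intro h
      apply hj
      have : w.symm j = (⟨k, hk⟩ : Fin n) := Fin.ext h
      rw [← this, Equiv.apply_symm_apply]
    have hne : w ⟨k, hk⟩ ≠ j := fun h => hj h.symm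
    simp only [Bc, if_neg hne, Equiv.symm_apply_apply, mySgn, Fin.lt_def]
    split_ifs <;> first | (exfalso; omega) | linarith

lemma col_top_nonneg {n : ℕ} (C : Matrix (Fin n) (Fin n) ℤ)
    (hoff : ∀ i j, i ≠ j → C i j ≤ 0) (w : Equiv.Perm (Fin n))
    (k : ℕ) (hk : k < n) (r : Fin n) (hr : r ≠ w ⟨k, hk⟩) :
    0 ≤ stateF C w (k + 1) (Sum.inl r) (w ⟨k, hk⟩) := by
  simp only [stateF, Sum.elim_inl, Equiv.symm_apply_apply, mySgn_self k hk, mul_one]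
  have hCr : C r (w ⟨k, hk⟩) ≤ 0 := hoff _ _ fun h => hr h
  have ha : (w.symm r : ℕ) ≠ k := by
    intro h
    apply hr
    have : w.symm r = (⟨k, hk⟩ : Fin n) := Fin.ext h
    rw [← this, Equiv.apply_symm_apply]
  simp only [Bc, if_neg hr, Equiv.symm_apply_apply, mySgn, Fin.lt_def]
  split_ifs <;> first | (exfalso; omega) | linarith

lemma col_bot_nonneg {n : ℕ} (C : Matrix (Fin n) (Fin n) ℤ)
    (w : Equiv.Perm (Fin n)) (k : ℕ) (hk : k < n) (r : Fin n) :
    0 ≤ stateF C w (k + 1) (Sum.inr r) (w ⟨k, hk⟩) := by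
  simp only [stateF, Sum.elim_inr]
  split_ifs with h
  · subst h; rw [Equiv.symm_apply_apply, mySgn_self k hk]; norm_num
  · exact le_refl 0

lemma step {n : ℕ} (C : Matrix (Fin n) (Fin n) ℤ)
    (hoff : ∀ i j, i ≠ j → C i j ≤ 0) (w : Equiv.Perm (Fin n))
    (k : ℕ) (hk : k < n) :
    extMut (stateF C w (k + 1)) (w ⟨k, hk⟩) = stateF C w k := by
  have hsymm : w.symm (w ⟨k, hk⟩) = ⟨k, hk⟩ := Equiv.symm_apply_apply w _
  have hne_of : ∀ a : Fin n, a ≠ w ⟨k, hk⟩ → (w.symm a : ℕ) ≠ k := by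
    intro a hane h
    apply hane
    have : w.symm a = (⟨k, hk⟩ : Fin n) := Fin.ext h
    rw [← this, Equiv.apply_symm_apply]
  funext i j
  cases i with
  | inl r =>
    by_cases hr : r = w ⟨k, hk⟩
    · -- mutated row: sign flip
      subst hr
      have hcond : (Sum.inl (w ⟨k, hk⟩) : Fin n ⊕ Fin n) = Sum.inl (w ⟨k, hk⟩) ∨
          j = w ⟨k, hk⟩ := Or.inl rfl
      simp only [extMut]
      simp only [true_or, or_true, if_true]
      simp only [stateF, Sum.elim_inl, hsymm,
        mySgn_self k hk, mySgn_self' k hk, one_mul, neg_mul]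
      by_cases hj : j = w ⟨k, hk⟩
      · subst hj; simp [Bc, hsymm]
      · rw [mySgn_succ (hne_of j hj)]
    · by_cases hj : j = w ⟨k, hk⟩
      · -- mutated column: sign flip
        subst hj
        have hcond : (Sum.inl r : Fin n ⊕ Fin n) = Sum.inl (w ⟨k, hk⟩) ∨
            w ⟨k, hk⟩ = w ⟨k, hk⟩ := Or.inr rfl
        simp only [extMut]
        simp only [true_or, or_true, if_true]
        simp only [stateF, Sum.elim_inl, hsymm,
          mySgn_self k hk, mySgn_self' k hk, mul_one, mul_neg_one]
        rw [mySgn_succ (hne_of r hr)]; ring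
      · -- untouched entry
        have hcond : ¬((Sum.inl r : Fin n ⊕ Fin n) = Sum.inl (w ⟨k, hk⟩) ∨
            j = w ⟨k, hk⟩) := by
          rintro (h | h)
          · exact hr (Sum.inl.inj h)
          · exact hj h
        simp only [extMut, if_neg hcond]
        rw [cancel (col_top_nonneg C hoff w k hk r hr)
          (row_nonpos C hoff w k hk j)]
        simp only [stateF, Sum.elim_inl,
          mySgn_succ (hne_of r hr), mySgn_succ (hne_of j hj)]
  | inr r =>
    by_cases hj : j = w ⟨k, hk⟩
    · subst hj
      have hcond : (Sum.inr r : Fin n ⊕ Fin n) = Sum.inl (w ⟨k, hk⟩) ∨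
          w ⟨k, hk⟩ = w ⟨k, hk⟩ := Or.inr rfl
      simp only [extMut]
      simp only [true_or, or_true, if_true]
      simp only [stateF, Sum.elim_inr]
      by_cases hrj : r = w ⟨k, hk⟩
      · subst hrj
        simp [hsymm, mySgn_self k hk, mySgn_self' k hk]
      · simp [hrj]
    · have hcond : ¬((Sum.inr r : Fin n ⊕ Fin n) = Sum.inl (w ⟨k, hk⟩) ∨
          j = w ⟨k, hk⟩) := by
        rintro (h | h)
        · cases h
        · exact hj h
      simp only [extMut, if_neg hcond]
      rw [cancel (col_bot_nonneg C w k hk r) (row_nonpos C hoff w k hk j)]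
      simp only [stateF, Sum.elim_inr]
      by_cases hrj : r = j
      · subst hrj
        rw [if_pos rfl, if_pos rfl, mySgn_succ (hne_of r hj)]
      · rw [if_neg hrj, if_neg hrj]

lemma base {n : ℕ} (C : Matrix (Fin n) (Fin n) ℤ) (w : Equiv.Perm (Fin n)) :
    stateF C w n = extOf (Bc C w) := by
  funext i j
  have hs : ∀ a : Fin n, mySgn n a = 1 := by
    intro a; simp [mySgn, Nat.not_le.mpr a.isLt]
  cases i with
  | inl r => simp [stateF, extOf, hs]
  | inr r => simp [stateF, extOf, hs]

lemma inv {n : ℕ} (C : Matrix (Fin n) (Fin n) ℤ)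
    (hoff : ∀ i j, i ≠ j → C i j ≤ 0) (w : Equiv.Perm (Fin n)) :
    ∀ m : ℕ, coxState C w (n - m) = stateF C w (n - m) := by
  intro m
  induction m with
  | zero =>
    simp only [Nat.sub_zero]
    rw [base]
    unfold coxState
    rw [List.drop_eq_nil_of_le (by simp [coxWord])]
    rfl
  | succ m ih =>
    by_cases h : m + 1 ≤ n
    · set k := n - (m + 1) with hkdef
      have hk : k < n := by omega
      have hstep : n - m = k + 1 := by omega
      rw [hstep] at ih
      have hlen : k < (coxWord w).length := by simpa [coxWord] using hk
      have hdrop : (coxWord w).drop k =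
          w ⟨k, hk⟩ :: (coxWord w).drop (k + 1) := by
        rw [List.drop_eq_getElem_cons hlen]
        congr 1
        simp [coxWord]
      show coxState C w k = stateF C w k
      unfold coxState
      rw [hdrop, List.foldr_cons]
      have : ((coxWord w).drop (k + 1)).foldr (fun idx A => extMut A idx)
          (extOf (Bc C w)) = stateF C w (k + 1) := ih
      rw [this, step C hoff w k hk]
    · have h0 : n - (m + 1) = n - m := by omega
      rw [h0]; exact ih

end CoxAux

/-- Sink-mutation periodicity of `B^c`: for a Cartan matrix `C` of Dynkin type
(diagonal `2`, nonpositive symmetrizable off-diagonal entries) and a Coxeter element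
`c = c_1 ⋯ c_n`, the composite mutation `μ_{c_1} ∘ ⋯ ∘ μ_{c_n}` applied to `[B^c; I_n]`
yields `[B^c; -I_n]`, and each `μ_{c_k}` in this sequence is a sink mutation (the row
of the matrix it is applied to, at the mutated vertex, is nonpositive). -/
theorem coxeter_sequence_sink_mutations {n : ℕ}
    (C : Matrix (Fin n) (Fin n) ℤ)
    (hdiag : ∀ i, C i i = 2)
    (hoff : ∀ i j, i ≠ j → C i j ≤ 0)
    (hzero : ∀ i j, C i j = 0 ↔ C j i = 0)
    (hsym : ∃ d : Fin n → ℤ, (∀ i, 0 < d i) ∧ ∀ i j, d i * C i j = d j * C j i)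
    (w : Equiv.Perm (Fin n)) :
    (coxState C w 0 =
      fun i j => Sum.elim (fun r => Bc C w r j) (fun r => if r = j then -1 else 0) i) ∧
    (∀ k : Fin n, ∀ j : Fin n, coxState C w (k + 1) (Sum.inl (w k)) j ≤ 0) := by
  constructor
  · have h := CoxAux.inv C hoff w n
    rw [Nat.sub_self] at h
    rw [h]
    funext i j
    have hs : ∀ a : Fin n, CoxAux.mySgn 0 a = -1 := by
      intro a; simp [CoxAux.mySgn]
    cases i with
    | inl r => simp [CoxAux.stateF, hs]
    | inr r => simp [CoxAux.stateF, hs]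
  · intro k j
    have h1 : (k : ℕ) + 1 ≤ n := k.isLt
    have h := CoxAux.inv C hoff w (n - ((k : ℕ) + 1))
    rw [Nat.sub_sub_self h1] at h
    rw [h]
    have hk : w k = w ⟨(k : ℕ), k.isLt⟩ := by congr
    rw [hk]
    exact CoxAux.row_nonpos C hoff w (k : ℕ) k.isLt j
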